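/- Fix 0 < q < 1 and i ∈ ℕ. Let G = (G_1,...,G_n) be i.i.d. geometric with parameter 1-q, and let D_i be the number of fixed points of π = Γ_n(G) lying in the set G_i = {j : G_j = i}. Then for all 0 ≤ k ≤ n, P(D_i ≥ k) = (q^i(1-q))^k, and P(D_i ≥ k) = 0 for k > n; that is, D_i is distributed as min(Geom(1 - q^i(1-q)), n). -/

import Mathlib

open MeasureTheory ProbabilityTheory

/-- `invGamma G j` is the 0-indexed position `π⁻¹(j)` of index `j` in the
permutation `π = Γₙ(G)` produced by the Maj sampler (indices ordered with `i` before
`j` iff `G i > G j`, or `G i = G j` and `i < j`). -/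
def invGamma {n : ℕ} (G : Fin n → ℕ) (j : Fin n) : ℕ :=
  (Finset.univ.filter (fun j' : Fin n =>
    G j < G j' ∨ (G j' = G j ∧ j' < j))).card

/-- `Dcount G i` is the number of fixed points of `π = Γₙ(G)` lying in the level set
`𝒢ᵢ = {j : G j = i}`; note `π j = j` iff `invGamma G j = j`. -/
def Dcount {n : ℕ} (G : Fin n → ℕ) (i : ℕ) : ℕ :=
  (Finset.univ.filter (fun j : Fin n => G j = i ∧ invGamma G j = (j : ℕ))).card

namespace MajComb
variable {n : ℕ}



def Lct (w : Fin n → Fin 3) (t : ℕ) : ℕ :=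
  (Finset.univ.filter (fun j : Fin n => (j : ℕ) < t ∧ w j = 0)).card

def Hct (w : Fin n → Fin 3) (t : ℕ) : ℕ :=
  (Finset.univ.filter (fun j : Fin n => t ≤ (j : ℕ) ∧ w j = 2)).card

def Fx (w : Fin n → Fin 3) : Finset (Fin n) :=
  Finset.univ.filter (fun j => w j = 1 ∧ Hct w ((j : ℕ) + 1) = Lct w (j : ℕ))

def Dword (w : Fin n → Fin 3) : ℕ := (Fx w).card

lemma fin3_cases (x : Fin 3) : x = 0 ∨ x = 1 ∨ x = 2 := by omega

lemma sum_ind_eq (a : Fin n) (P : Fin n → Prop) [DecidablePred P] :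
    (∑ j : Fin n, if j = a ∧ P j then (1:ℕ) else 0) = if P a then 1 else 0 := by
  rw [Finset.sum_eq_single a]
  · by_cases h : P a <;> simp [h]
  · intro b _ hb; simp [hb]
  · simp

lemma Lct_zero (w : Fin n → Fin 3) : Lct w 0 = 0 := by simp [Lct]

lemma Hct_of_ge (w : Fin n → Fin 3) {t : ℕ} (ht : n ≤ t) : Hct w t = 0 := by
  rw [Hct, Finset.card_eq_zero, Finset.filter_eq_empty_iff]
  rintro j - ⟨h1, -⟩
  have := j.isLt
  omega

lemma Lct_succ (w : Fin n → Fin 3) {t : ℕ} (ht : t < n) :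
    Lct w (t + 1) = Lct w t + (if w ⟨t, ht⟩ = 0 then 1 else 0) := by
  classical
  rw [Lct, Lct, Finset.card_filter, Finset.card_filter]
  have key : ∀ j : Fin n,
      (if (j : ℕ) < t + 1 ∧ w j = 0 then (1:ℕ) else 0)
        = (if (j : ℕ) < t ∧ w j = 0 then (1:ℕ) else 0)
          + (if j = ⟨t, ht⟩ ∧ w j = 0 then (1:ℕ) else 0) := by
    intro j
    by_cases hw : w j = 0
    · have hval : (j = (⟨t, ht⟩ : Fin n)) ↔ (j : ℕ) = t := by
        constructor
        · intro h; rw [h]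
        · intro h; exact Fin.ext h
      by_cases h2 : (j : ℕ) = t
      · simp [hw, hval, h2]
      · simp only [hw, and_true, hval, h2, if_false]
        by_cases h1 : (j : ℕ) < t
        · rw [if_pos (by omega), if_pos h1]
        · rw [if_neg (by omega), if_neg h1]
    · simp [hw]
  rw [Finset.sum_congr rfl (fun j _ => key j), Finset.sum_add_distrib]
  congr 1
  exact sum_ind_eq _ _

lemma Lct_succ_of_ge (w : Fin n → Fin 3) {t : ℕ} (ht : n ≤ t) :
    Lct w (t + 1) = Lct w t := by
  rw [Lct, Lct]
  congr 1
  apply Finset.filter_congr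
  intro j _
  have := j.isLt
  constructor
  · rintro ⟨-, h⟩; exact ⟨by omega, h⟩
  · rintro ⟨-, h⟩; exact ⟨by omega, h⟩

lemma Hct_succ (w : Fin n → Fin 3) {t : ℕ} (ht : t < n) :
    Hct w t = Hct w (t + 1) + (if w ⟨t, ht⟩ = 2 then 1 else 0) := by
  classical
  rw [Hct, Hct, Finset.card_filter, Finset.card_filter]
  have key : ∀ j : Fin n,
      (if t ≤ (j : ℕ) ∧ w j = 2 then (1:ℕ) else 0)
        = (if t + 1 ≤ (j : ℕ) ∧ w j = 2 then (1:ℕ) else 0)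
          + (if j = ⟨t, ht⟩ ∧ w j = 2 then (1:ℕ) else 0) := by
    intro j
    by_cases hw : w j = 2
    · have hval : (j = (⟨t, ht⟩ : Fin n)) ↔ (j : ℕ) = t := by
        constructor
        · intro h; rw [h]
        · intro h; exact Fin.ext h
      by_cases h2 : (j : ℕ) = t
      · simp [hw, hval, h2]
      · simp only [hw, and_true, hval, h2, if_false]
        by_cases h1 : t + 1 ≤ (j : ℕ)
        · rw [if_pos (by omega), if_pos h1]
        · rw [if_neg (by omega), if_neg h1]
    · simp [hw]
  rw [Finset.sum_congr rfl (fun j _ => key j), Finset.sum_add_distrib]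
  congr 1
  exact sum_ind_eq _ _

lemma Hct_succ_of_ge (w : Fin n → Fin 3) {t : ℕ} (ht : n ≤ t) :
    Hct w (t + 1) = Hct w t := by
  rw [Hct_of_ge w ht, Hct_of_ge w (by omega)]

def fZ (w : Fin n → Fin 3) (t : ℕ) : ℤ := (Lct w t : ℤ) - (Hct w t : ℤ)

lemma fZ_succ (w : Fin n → Fin 3) {t : ℕ} (ht : t < n) :
    fZ w (t + 1) = fZ w t + (if w ⟨t, ht⟩ = 1 then 0 else 1) := by
  have h1 := Lct_succ w ht
  have h2 := Hct_succ w ht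
  unfold fZ
  rcases fin3_cases (w ⟨t, ht⟩) with h | h | h <;> rw [h] at h1 h2 <;> rw [h]
  · rw [if_pos rfl] at h1
    rw [if_neg (by decide)] at h2
    rw [if_neg (by decide)]
    omega
  · rw [if_neg (by decide)] at h1
    rw [if_neg (by decide)] at h2
    rw [if_pos rfl]
    omega
  · rw [if_neg (by decide)] at h1
    rw [if_pos rfl] at h2
    rw [if_neg (by decide)]
    omega

lemma fZ_succ_le (w : Fin n → Fin 3) (t : ℕ) : fZ w (t + 1) ≤ fZ w t + 1 := by
  by_cases ht : t < n
  · rw [fZ_succ w ht]; split <;> omega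
  · unfold fZ
    rw [Lct_succ_of_ge w (by omega), Hct_succ_of_ge w (by omega)]
    omega

lemma fZ_le_succ (w : Fin n → Fin 3) (t : ℕ) : fZ w t ≤ fZ w (t + 1) := by
  by_cases ht : t < n
  · rw [fZ_succ w ht]; split <;> omega
  · unfold fZ
    rw [Lct_succ_of_ge w (by omega), Hct_succ_of_ge w (by omega)]

lemma fZ_mono (w : Fin n → Fin 3) : Monotone (fZ w) :=
  monotone_nat_of_le_succ (fZ_le_succ w)

lemma fZ_nonpos_zero (w : Fin n → Fin 3) : fZ w 0 ≤ 0 := by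
  rw [fZ, Lct_zero]; omega

lemma fZ_nonneg_n (w : Fin n → Fin 3) : 0 ≤ fZ w n := by
  rw [fZ, Hct_of_ge w le_rfl]; omega

lemma canon_exists (w : Fin n → Fin 3) :
    ∃ s, s ≤ n ∧ fZ w s = 0 ∧ ∀ j : Fin n, (j : ℕ) + 1 = s → w j ≠ 1 := by
  classical
  have hex : ∃ t, 0 ≤ fZ w t := ⟨n, fZ_nonneg_n w⟩
  have hs : 0 ≤ fZ w (Nat.find hex) := Nat.find_spec hex
  have hsn : Nat.find hex ≤ n := Nat.find_le (fZ_nonneg_n w)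
  rcases Nat.eq_zero_or_pos (Nat.find hex) with h0 | h0
  · refine ⟨Nat.find hex, hsn, ?_, ?_⟩
    · have h00 := fZ_nonpos_zero w
      rw [h0] at hs ⊢; omega
    · intro j hj; omega
  · obtain ⟨t, hts⟩ : ∃ t, Nat.find hex = t + 1 := ⟨Nat.find hex - 1, by omega⟩
    have htn : t < n := by omega
    have hprev : ¬ (0 ≤ fZ w t) := Nat.find_min hex (by omega)
    have hstep := fZ_succ w htn
    rw [← hts] at hstep
    have hfz : fZ w (Nat.find hex) = 0 := by split at hstep <;> omega
    refine ⟨Nat.find hex, hsn, hfz, ?_⟩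
    intro j hj hwj
    have hje : j = ⟨t, htn⟩ := by apply Fin.ext; simp; omega
    rw [hje] at hwj
    rw [if_pos hwj] at hstep
    omega

lemma canon_aux (w : Fin n → Fin 3) {s : ℕ} (h0 : 0 < s) (hsn : s ≤ n)
    (he : ∀ j : Fin n, (j : ℕ) + 1 = s → w j ≠ 1) :
    fZ w s = fZ w (s - 1) + 1 := by
  obtain ⟨t, rfl⟩ : ∃ t, s = t + 1 := ⟨s - 1, by omega⟩
  have htn : t < n := by omega
  have hw : w ⟨t, htn⟩ ≠ 1 := he _ (by simp)
  rw [fZ_succ w htn, if_neg hw]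
  simp

lemma canon_unique (w : Fin n → Fin 3) {s s' : ℕ}
    (hsn : s ≤ n) (hfs : fZ w s = 0) (he : ∀ j : Fin n, (j : ℕ) + 1 = s → w j ≠ 1)
    (hsn' : s' ≤ n) (hfs' : fZ w s' = 0) (he' : ∀ j : Fin n, (j : ℕ) + 1 = s' → w j ≠ 1) :
    s = s' := by
  by_contra hne
  rcases Nat.lt_or_ge s s' with hlt | hge
  · have heq := canon_aux w (by omega) hsn' he'
    have hmono : fZ w s ≤ fZ w (s' - 1) := fZ_mono w (by omega)
    omega
  · have hlt : s' < s := by omega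
    have heq := canon_aux w (by omega) hsn he
    have hmono : fZ w s' ≤ fZ w (s - 1) := fZ_mono w (by omega)
    omega



def goodSplit (k : ℕ) (w : Fin n → Fin 3) (s : ℕ) : Prop :=
  s + k ≤ n ∧ (∀ j : Fin n, s ≤ (j : ℕ) → (j : ℕ) < s + k → w j = 1) ∧
    (∀ j : Fin n, (j : ℕ) + 1 = s → w j ≠ 1) ∧ Lct w s = Hct w (s + k)

instance (k : ℕ) (w : Fin n → Fin 3) (s : ℕ) : Decidable (goodSplit k w s) := by
  unfold goodSplit; infer_instance

lemma Lct_mono (w : Fin n → Fin 3) {t t' : ℕ} (h : t ≤ t') : Lct w t ≤ Lct w t' := by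
  apply Finset.card_le_card
  apply Finset.monotone_filter_right
  rintro j - ⟨h1, h2⟩
  exact ⟨by omega, h2⟩

lemma Hct_anti (w : Fin n → Fin 3) {t t' : ℕ} (h : t ≤ t') : Hct w t' ≤ Hct w t := by
  apply Finset.card_le_card
  apply Finset.monotone_filter_right
  rintro j - ⟨h1, h2⟩
  exact ⟨by omega, h2⟩

lemma Hct_eq_of_block (w : Fin n → Fin 3) {a b : ℕ} (hab : a ≤ b)
    (hblock : ∀ j : Fin n, a ≤ (j : ℕ) → (j : ℕ) < b → w j ≠ 2) : Hct w a = Hct w b := by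
  unfold Hct
  congr 1
  apply Finset.filter_congr
  intro j _
  constructor
  · rintro ⟨h1, h2⟩
    refine ⟨?_, h2⟩
    by_contra hb
    exact hblock j h1 (by omega) h2
  · rintro ⟨h1, h2⟩
    exact ⟨by omega, h2⟩

lemma Lct_eq_of_block (w : Fin n → Fin 3) {a b : ℕ} (hab : a ≤ b)
    (hblock : ∀ j : Fin n, a ≤ (j : ℕ) → (j : ℕ) < b → w j ≠ 0) : Lct w b = Lct w a := by
  unfold Lct
  congr 1
  apply Finset.filter_congr
  intro j _
  constructor
  · rintro ⟨h1, h2⟩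
    refine ⟨?_, h2⟩
    by_contra hb
    exact hblock j (by omega) h1 h2
  · rintro ⟨h1, h2⟩
    exact ⟨by omega, h2⟩

lemma goodSplit_fZ {k : ℕ} {w : Fin n → Fin 3} {s : ℕ} (h : goodSplit k w s) :
    fZ w s = 0 := by
  obtain ⟨h1, h2, h3, h4⟩ := h
  have hH : Hct w s = Hct w (s + k) :=
    Hct_eq_of_block w (by omega) (fun j hj1 hj2 => by rw [h2 j hj1 hj2]; decide)
  unfold fZ
  rw [h4, ← hH]
  omega

lemma goodSplit_unique {k : ℕ} {w : Fin n → Fin 3} {s s' : ℕ}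
    (h : goodSplit k w s) (h' : goodSplit k w s') : s = s' :=
  canon_unique w (by have := h.1; omega) (goodSplit_fZ h) h.2.2.1
    (by have := h'.1; omega) (goodSplit_fZ h') h'.2.2.1

lemma goodSplit_block_fixed {k : ℕ} {w : Fin n → Fin 3} {s : ℕ} (h : goodSplit k w s)
    {d : ℕ} (hd : d < k) (hlt : s + d < n) : (⟨s + d, hlt⟩ : Fin n) ∈ Fx w := by
  obtain ⟨h1, h2, h3, h4⟩ := h
  have hw : w ⟨s + d, hlt⟩ = 1 := h2 _ (by simp) (by simp; omega)
  have hH : Hct w (s + d + 1) = Hct w (s + k) :=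
    Hct_eq_of_block w (by omega) (fun j hj1 hj2 => by rw [h2 j (by omega) hj2]; decide)
  have hL : Lct w (s + d) = Lct w s :=
    Lct_eq_of_block w (by omega) (fun j hj1 hj2 => by rw [h2 j hj1 (by omega)]; decide)
  simp only [Fx, Finset.mem_filter, Finset.mem_univ, true_and]
  exact ⟨hw, by rw [hH, hL, h4]⟩

lemma le_Dword_of_goodSplit {k : ℕ} {w : Fin n → Fin 3} {s : ℕ} (h : goodSplit k w s) :
    k ≤ Dword w := by
  classical
  have h1 := h.1
  have hsub : ∀ b : Fin k, (⟨s + (b : ℕ), by omega⟩ : Fin n) ∈ Fx w :=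
    fun b => goodSplit_block_fixed h b.isLt _
  have hinj : Function.Injective
      (fun b : Fin k => (⟨s + (b : ℕ), by omega⟩ : Fin n)) := by
    intro a b hab
    apply Fin.ext
    have := congrArg Fin.val hab
    simp at this
    omega
  calc k = Finset.univ.card := (Finset.card_fin k).symm
    _ = (Finset.univ.image (fun b : Fin k => (⟨s + (b : ℕ), by omega⟩ : Fin n))).card := by
        rw [Finset.card_image_of_injective _ hinj]
    _ ≤ (Fx w).card := by
        apply Finset.card_le_card
        intro x hx
        simp only [Finset.mem_image] at hx
        obtain ⟨b, -, rfl⟩ := hx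
        exact hsub b

lemma mem_Fx_iff {w : Fin n → Fin 3} {j : Fin n} :
    j ∈ Fx w ↔ w j = 1 ∧ Hct w ((j : ℕ) + 1) = Lct w (j : ℕ) := by
  simp [Fx]

lemma Fx_interval {w : Fin n → Fin 3} {j1 j2 j : Fin n} (h1 : j1 ∈ Fx w) (h2 : j2 ∈ Fx w)
    (hle1 : (j1 : ℕ) ≤ (j : ℕ)) (hle2 : (j : ℕ) ≤ (j2 : ℕ)) : j ∈ Fx w := by
  rw [mem_Fx_iff] at h1 h2 ⊢
  obtain ⟨hw1, hb1⟩ := h1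
  obtain ⟨hw2, hb2⟩ := h2
  have ha12 : Lct w (j1 : ℕ) ≤ Lct w (j2 : ℕ) := Lct_mono w (by omega)
  have hb12 : Hct w ((j2 : ℕ) + 1) ≤ Hct w ((j1 : ℕ) + 1) := Hct_anti w (by omega)
  -- all four quantities are equal
  have hall : Lct w (j1 : ℕ) = Lct w (j2 : ℕ) ∧
      Hct w ((j1 : ℕ) + 1) = Hct w ((j2 : ℕ) + 1) := by omega
  have haj : Lct w (j : ℕ) = Lct w (j1 : ℕ) := by
    have u1 : Lct w (j1 : ℕ) ≤ Lct w (j : ℕ) := Lct_mono w hle1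
    have u2 : Lct w (j : ℕ) ≤ Lct w (j2 : ℕ) := Lct_mono w hle2
    omega
  have hbj : Hct w ((j : ℕ) + 1) = Hct w ((j1 : ℕ) + 1) := by
    have u1 : Hct w ((j : ℕ) + 1) ≤ Hct w ((j1 : ℕ) + 1) := Hct_anti w (by omega)
    have u2 : Hct w ((j2 : ℕ) + 1) ≤ Hct w ((j : ℕ) + 1) := Hct_anti w (by omega)
    omega
  have hwj : w j = 1 := by
    rcases fin3_cases (w j) with hw | hw | hw
    · -- letter 0 : contradiction with Lct step
      exfalso
      have hjne : (j : ℕ) < (j2 : ℕ) := by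
        rcases Nat.lt_or_ge (j : ℕ) (j2 : ℕ) with h | h
        · exact h
        · have : j = j2 := Fin.ext (by omega)
          rw [this, hw2] at hw
          exact absurd hw (by decide)
      have hstep := Lct_succ w j.isLt
      rw [Fin.eta, if_pos hw] at hstep
      have : Lct w ((j : ℕ) + 1) ≤ Lct w (j2 : ℕ) := Lct_mono w (by omega)
      omega
    · exact hw
    · -- letter 2 : contradiction with Hct step
      exfalso
      have hjne : (j1 : ℕ) < (j : ℕ) := by
        rcases Nat.lt_or_ge (j1 : ℕ) (j : ℕ) with h | h
        · exact h
        · have : j = j1 := Fin.ext (by omega)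
          rw [this, hw1] at hw
          exact absurd hw (by decide)
      have hstep := Hct_succ w j.isLt
      rw [Fin.eta, if_pos hw] at hstep
      have : Hct w (j : ℕ) ≤ Hct w ((j1 : ℕ) + 1) := Hct_anti w (by omega)
      omega
  exact ⟨hwj, by omega⟩

lemma exists_goodSplit {k : ℕ} {w : Fin n → Fin 3} (hkn : k ≤ n) (hk : k ≤ Dword w) :
    ∃ s, goodSplit k w s := by
  classical
  rcases Nat.eq_zero_or_pos k with rfl | hkpos
  · obtain ⟨s, hsn, hfz, he⟩ := canon_exists w
    refine ⟨s, by omega, fun j h1 h2 => by omega, he, ?_⟩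
    unfold fZ at hfz
    have : (Lct w s : ℤ) = Hct w s := by omega
    rw [Nat.add_zero]
    exact_mod_cast this
  · have hne : (Fx w).Nonempty := by
      rw [← Finset.card_pos]
      have : Dword w = (Fx w).card := rfl
      omega
    set m := (Fx w).min' hne with hmdef
    set M := (Fx w).max' hne with hMdef
    have hm : m ∈ Fx w := Finset.min'_mem _ hne
    have hM : M ∈ Fx w := Finset.max'_mem _ hne
    have hsub : Fx w ⊆ Finset.Icc m M :=
      fun x hx => Finset.mem_Icc.mpr ⟨Finset.min'_le _ x hx, Finset.le_max' _ x hx⟩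
    have hcard : Dword w ≤ (M : ℕ) + 1 - (m : ℕ) := by
      have := Finset.card_le_card hsub
      rw [Fin.card_Icc] at this
      exact this
    have hmM : (m : ℕ) ≤ (M : ℕ) := by
      have := Finset.min'_le _ M hM
      exact this
    have hMn : (M : ℕ) < n := M.isLt
    have hskn : (m : ℕ) + k ≤ n := by omega
    refine ⟨(m : ℕ), hskn, ?_, ?_, ?_⟩
    · -- block all ones
      intro j hj1 hj2
      have hj2' : (j : ℕ) ≤ (M : ℕ) := by omega
      have := Fx_interval hm hM hj1 hj2'
      exact (mem_Fx_iff.mp this).1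
    · -- left-maximality
      intro j hj hwj
      have hmem : j ∈ Fx w := by
        rw [mem_Fx_iff]
        refine ⟨hwj, ?_⟩
        obtain ⟨hwm, hbm⟩ := mem_Fx_iff.mp hm
        have hHm : Hct w (m : ℕ) = Hct w ((m : ℕ) + 1) := by
          have hstep := Hct_succ w m.isLt
          rw [Fin.eta, hwm] at hstep
          rw [if_neg (by decide)] at hstep
          omega
        have hLm : Lct w ((j : ℕ) + 1) = Lct w (j : ℕ) := by
          have hstep := Lct_succ w j.isLt
          rw [Fin.eta, hwj] at hstep
          rw [if_neg (by decide)] at hstep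
          omega
        rw [hj, hHm, hbm, ← hj, hLm]
      have := Finset.min'_le _ j hmem
      have : (m : ℕ) ≤ (j : ℕ) := this
      omega
    · -- balance
      have hlast : ((m : ℕ) + (k - 1)) < n := by omega
      have hlastFx : (⟨(m : ℕ) + (k - 1), hlast⟩ : Fin n) ∈ Fx w := by
        apply Fx_interval hm hM
        · simp
        · simp; omega
      obtain ⟨hwl, hbl⟩ := mem_Fx_iff.mp hlastFx
      simp only at hbl
      have hLeq : Lct w ((m : ℕ) + (k - 1)) = Lct w (m : ℕ) := by
        apply Lct_eq_of_block w (by omega)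
        intro j hj1 hj2
        have hj2' : (j : ℕ) ≤ (M : ℕ) := by omega
        have := Fx_interval hm hM hj1 hj2'
        rw [(mem_Fx_iff.mp this).1]
        decide
      have hfin : (m : ℕ) + (k - 1) + 1 = (m : ℕ) + k := by omega
      rw [hfin] at hbl
      omega


/-- extend a word to ℕ -/
def ext3 (w : Fin n → Fin 3) : ℕ → Fin 3 := fun x => if h : x < n then w ⟨x, h⟩ else 0

lemma ext3_lt (w : Fin n → Fin 3) {x : ℕ} (h : x < n) : ext3 w x = w ⟨x, h⟩ := dif_pos h

lemma ext3_fin (w : Fin n → Fin 3) (j : Fin n) : ext3 w (j : ℕ) = w j := by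
  rw [ext3_lt w j.isLt, Fin.eta]

lemma Lct_eq_range (w : Fin n → Fin 3) {t : ℕ} (ht : t ≤ n) :
    Lct w t = ∑ x ∈ Finset.range t, (if ext3 w x = 0 then 1 else 0) := by
  classical
  rw [Lct, Finset.card_filter]
  have h1 : ∀ j : Fin n, (if (j : ℕ) < t ∧ w j = 0 then (1:ℕ) else 0)
      = (fun x : ℕ => if x < t ∧ ext3 w x = 0 then (1:ℕ) else 0) (j : ℕ) := by
    intro j
    simp only [ext3_fin]
  rw [Finset.sum_congr rfl (fun j _ => h1 j),
    Fin.sum_univ_eq_sum_range (fun x => if x < t ∧ ext3 w x = 0 then (1:ℕ) else 0) n]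
  rw [← Finset.sum_subset (Finset.range_subset_range.mpr ht)]
  · apply Finset.sum_congr rfl
    intro x hx
    rw [Finset.mem_range] at hx
    simp [hx]
  · intro x _ hx
    rw [Finset.mem_range] at hx
    rw [if_neg]
    tauto

lemma Hct_eq_Ico (w : Fin n → Fin 3) (t : ℕ) :
    Hct w t = ∑ x ∈ Finset.Ico t n, (if ext3 w x = 2 then 1 else 0) := by
  classical
  rw [Hct, Finset.card_filter]
  have h1 : ∀ j : Fin n, (if t ≤ (j : ℕ) ∧ w j = 2 then (1:ℕ) else 0)
      = (fun x : ℕ => if t ≤ x ∧ ext3 w x = 2 then (1:ℕ) else 0) (j : ℕ) := by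
    intro j
    simp only [ext3_fin]
  rw [Finset.sum_congr rfl (fun j _ => h1 j),
    Fin.sum_univ_eq_sum_range (fun x => if t ≤ x ∧ ext3 w x = 2 then (1:ℕ) else 0) n]
  have hsub : Finset.Ico t n ⊆ Finset.range n := by
    intro x hx
    rw [Finset.mem_Ico] at hx
    rw [Finset.mem_range]
    omega
  rw [← Finset.sum_subset hsub]
  · apply Finset.sum_congr rfl
    intro x hx
    rw [Finset.mem_Ico] at hx
    simp [hx.1]
  · intro x hx1 hx2
    rw [Finset.mem_range] at hx1
    rw [Finset.mem_Ico] at hx2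
    rw [if_neg]
    tauto

/-- product of weights of a word -/
def prodp (pf : Fin 3 → ℝ) (w : Fin n → Fin 3) : ℝ := ∏ j : Fin n, pf (w j)

lemma prodp_eq_range (pf : Fin 3 → ℝ) (w : Fin n → Fin 3) :
    prodp pf w = ∏ x ∈ Finset.range n, pf (ext3 w x) := by
  rw [prodp]
  rw [Finset.prod_congr rfl (fun j (_ : j ∈ Finset.univ) => by
    rw [← ext3_fin w j] : ∀ j ∈ Finset.univ, pf (w j) = (fun x : ℕ => pf (ext3 w x)) (j : ℕ))]
  exact Fin.prod_univ_eq_prod_range (fun x => pf (ext3 w x)) n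

lemma sum_prodp (pf : Fin 3 → ℝ) (m : ℕ) :
    ∑ z : Fin m → Fin 3, prodp pf z = (pf 0 + pf 1 + pf 2) ^ m := by
  classical
  have h := Finset.prod_univ_sum (fun _ : Fin m => (Finset.univ : Finset (Fin 3)))
    (fun _ v => pf v)
  rw [Fintype.piFinset_univ] at h
  simp only [prodp]
  rw [← h, Finset.prod_const, Fin.sum_univ_three pf, Finset.card_univ, Fintype.card_fin]

def ins (s k : ℕ) {m : ℕ} (z : Fin m → Fin 3) (n : ℕ) : Fin n → Fin 3 := fun j =>
  if (j : ℕ) < s then ext3 z (j : ℕ)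
  else if (j : ℕ) < s + k then 1
  else ext3 z ((j : ℕ) - k)

def del (s k : ℕ) {n : ℕ} (w : Fin n → Fin 3) (m : ℕ) : Fin m → Fin 3 := fun j =>
  if (j : ℕ) < s then ext3 w (j : ℕ) else ext3 w ((j : ℕ) + k)

section Transfer

variable {s k m : ℕ} (hmn : m + k = n) (hs : s ≤ m) (z : Fin m → Fin 3)

set_option linter.unusedSectionVars false

include hmn hs

lemma ext3_ins_lt {x : ℕ} (hx : x < s) : ext3 (ins s k z n) x = ext3 z x := by
  by_cases hxn : x < n
  · rw [ext3_lt _ hxn]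
    unfold ins
    simp only [Fin.val_mk]
    rw [if_pos hx]
  · rw [ext3, dif_neg hxn, ext3, dif_neg (by omega)]

lemma ext3_ins_mid {x : ℕ} (hx1 : s ≤ x) (hx2 : x < s + k) (hxn : x < n) :
    ext3 (ins s k z n) x = 1 := by
  rw [ext3_lt _ hxn]
  unfold ins
  simp only [Fin.val_mk]
  rw [if_neg (by omega), if_pos hx2]

lemma ext3_ins_ge {x : ℕ} (hx : s + k ≤ x) : ext3 (ins s k z n) x = ext3 z (x - k) := by
  by_cases hxn : x < n
  · rw [ext3_lt _ hxn]
    unfold ins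
    simp only [Fin.val_mk]
    rw [if_neg (by omega), if_neg (by omega)]
  · rw [ext3, dif_neg hxn, ext3, dif_neg (by omega)]

lemma Lct_ins : Lct (ins s k z n) s = Lct z s := by
  rw [Lct_eq_range _ (show s ≤ n by omega), Lct_eq_range _ hs]
  apply Finset.sum_congr rfl
  intro x hx
  rw [Finset.mem_range] at hx
  rw [ext3_ins_lt hmn hs z hx]

lemma Hct_ins : Hct (ins s k z n) (s + k) = Hct z s := by
  rw [Hct_eq_Ico, Hct_eq_Ico]
  apply Finset.sum_nbij' (fun x => x - k) (fun y => y + k)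
  · intro x hx
    rw [Finset.mem_Ico] at hx ⊢
    omega
  · intro y hy
    rw [Finset.mem_Ico] at hy ⊢
    omega
  · intro x hx
    rw [Finset.mem_Ico] at hx
    omega
  · intro y hy
    rw [Finset.mem_Ico] at hy
    omega
  · intro x hx
    rw [Finset.mem_Ico] at hx
    rw [ext3_ins_ge hmn hs z hx.1]

lemma prodp_ins (pf : Fin 3 → ℝ) :
    prodp pf (ins s k z n) = (pf 1) ^ k * prodp pf z := by
  rw [prodp_eq_range, prodp_eq_range]
  rw [Finset.range_eq_Ico, ← Finset.prod_Ico_consecutive _ (show 0 ≤ s by omega)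
    (show s ≤ n by omega), ← Finset.prod_Ico_consecutive _ (show s ≤ s + k by omega)
    (show s + k ≤ n by omega)]
  rw [Finset.range_eq_Ico, ← Finset.prod_Ico_consecutive (fun x => pf (ext3 z x))
    (show 0 ≤ s by omega) (show s ≤ m by omega)]
  have h1 : ∏ x ∈ Finset.Ico 0 s, pf (ext3 (ins s k z n) x)
      = ∏ x ∈ Finset.Ico 0 s, pf (ext3 z x) := by
    apply Finset.prod_congr rfl
    intro x hx
    rw [Finset.mem_Ico] at hx
    rw [ext3_ins_lt hmn hs z hx.2]
  have h2 : ∏ x ∈ Finset.Ico s (s + k), pf (ext3 (ins s k z n) x) = (pf 1) ^ k := by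
    rw [Finset.prod_congr rfl (fun x hx => by
      rw [Finset.mem_Ico] at hx
      rw [ext3_ins_mid hmn hs z hx.1 hx.2 (by omega)] :
        ∀ x ∈ Finset.Ico s (s + k), pf (ext3 (ins s k z n) x) = pf 1)]
    rw [Finset.prod_const, Nat.card_Ico]
    congr 1
    omega
  have h3 : ∏ x ∈ Finset.Ico (s + k) n, pf (ext3 (ins s k z n) x)
      = ∏ y ∈ Finset.Ico s m, pf (ext3 z y) := by
    apply Finset.prod_nbij' (fun x => x - k) (fun y => y + k)
    · intro x hx
      rw [Finset.mem_Ico] at hx ⊢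
      omega
    · intro y hy
      rw [Finset.mem_Ico] at hy ⊢
      omega
    · intro x hx
      rw [Finset.mem_Ico] at hx
      omega
    · intro y hy
      rw [Finset.mem_Ico] at hy
      omega
    · intro x hx
      rw [Finset.mem_Ico] at hx
      rw [ext3_ins_ge hmn hs z hx.1]
  rw [h1, h2, h3]
  ring

lemma goodSplit_ins_iff : goodSplit k (ins s k z n) s ↔ goodSplit 0 z s := by
  unfold goodSplit
  constructor
  · rintro ⟨h1, h2, h3, h4⟩
    refine ⟨by omega, fun j hj1 hj2 => by omega, ?_, ?_⟩
    · intro j' hj' hz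
      have hjn : (j' : ℕ) < n := by omega
      have := h3 ⟨(j' : ℕ), hjn⟩ (by simpa using hj')
      apply this
      show ins s k z n ⟨(j' : ℕ), hjn⟩ = 1
      unfold ins
      simp only [Fin.val_mk]
      rw [if_pos (by omega)]
      rw [show ((⟨(j' : ℕ), hjn⟩ : Fin n) : ℕ) = (j' : ℕ) from rfl, ext3_fin]
      exact hz
    · rw [Nat.add_zero]
      rw [← Lct_ins hmn hs z, ← Hct_ins hmn hs z]
      exact h4
  · rintro ⟨h1, h2, h3, h4⟩
    have hs' : s ≤ m := by omega
    refine ⟨by omega, ?_, ?_, ?_⟩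
    · intro j hj1 hj2
      have := ext3_ins_mid hmn hs' z hj1 hj2 j.isLt
      rwa [ext3_fin] at this
    · intro j hj hins
      have hjm : (j : ℕ) < m := by omega
      apply h3 ⟨(j : ℕ), hjm⟩ (by simpa using hj)
      have hlt : (j : ℕ) < s := by omega
      have := ext3_ins_lt hmn hs' z hlt
      rw [ext3_fin] at this
      rw [hins] at this
      rw [show ext3 z ((j : ℕ)) = z ⟨(j : ℕ), hjm⟩ from ext3_lt z hjm]  at this
      exact this.symm
    · rw [Lct_ins hmn hs z, Hct_ins hmn hs z]
      rw [Nat.add_zero] at h4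
      exact h4

end Transfer

lemma ins_del {s k m : ℕ} (hmn : m + k = n) (hs : s ≤ m) (w : Fin n → Fin 3)
    (hblock : ∀ j : Fin n, s ≤ (j : ℕ) → (j : ℕ) < s + k → w j = 1) :
    ins s k (del s k w m) n = w := by
  funext j
  unfold ins del
  rcases Nat.lt_or_ge (j : ℕ) s with h1 | h1
  · rw [if_pos h1, ext3_lt _ (show (j : ℕ) < m by omega)]
    simp only
    rw [if_pos h1, ext3_fin]
  · rw [if_neg (by omega)]
    rcases Nat.lt_or_ge (j : ℕ) (s + k) with h2 | h2
    · rw [if_pos h2]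
      exact (hblock j h1 h2).symm
    · rw [if_neg (by omega), ext3_lt _ (show (j : ℕ) - k < m by have := j.isLt; omega)]
      simp only
      rw [if_neg (by omega), ext3_lt _ (show (j : ℕ) - k + k < n by have := j.isLt; omega)]
      congr 1
      apply Fin.ext
      simp
      omega

lemma del_ins {s k m : ℕ} (hmn : m + k = n) (hs : s ≤ m) (z : Fin m → Fin 3) :
    del s k (ins s k z n) m = z := by
  funext j
  unfold del
  rcases Nat.lt_or_ge (j : ℕ) s with h1 | h1
  · rw [if_pos h1, ext3_ins_lt hmn hs z h1, ext3_fin]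
  · rw [if_neg (by omega), ext3_ins_ge hmn hs z (by omega)]
    rw [show (j : ℕ) + k - k = (j : ℕ) by omega, ext3_fin]

lemma goodSplit0_exists {m : ℕ} (z : Fin m → Fin 3) : ∃ s, s ≤ m ∧ goodSplit 0 z s := by
  obtain ⟨s, hsm, hfz, he⟩ := canon_exists z
  refine ⟨s, hsm, by omega, fun j h1 h2 => by omega, he, ?_⟩
  unfold fZ at hfz
  rw [Nat.add_zero]
  omega

lemma sum_goodSplit (pf : Fin 3 → ℝ) {s k n : ℕ} (hsk : s + k ≤ n) :
    ∑ w : Fin n → Fin 3, (if goodSplit k w s then prodp pf w else 0)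
      = (pf 1) ^ k * ∑ z : Fin (n - k) → Fin 3, (if goodSplit 0 z s then prodp pf z else 0) := by
  classical
  have hmn : (n - k) + k = n := by omega
  rw [← Finset.sum_filter, ← Finset.sum_filter, Finset.mul_sum]
  apply Finset.sum_nbij' (fun w => del s k w (n - k)) (fun z => ins s k z n)
  · intro w hw
    rw [Finset.mem_filter] at hw ⊢
    obtain ⟨-, hgs⟩ := hw
    have hs : s ≤ n - k := by have := hgs.1; omega
    refine ⟨Finset.mem_univ _, ?_⟩
    rw [← goodSplit_ins_iff hmn hs]
    rw [ins_del hmn hs w hgs.2.1]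
    exact hgs
  · intro z hz
    rw [Finset.mem_filter] at hz ⊢
    obtain ⟨-, hgs⟩ := hz
    have hs : s ≤ n - k := by have := hgs.1; omega
    exact ⟨Finset.mem_univ _, (goodSplit_ins_iff hmn hs z).mpr hgs⟩
  · intro w hw
    rw [Finset.mem_filter] at hw
    have hs : s ≤ n - k := by have := hw.2.1; omega
    exact ins_del hmn hs w hw.2.2.1
  · intro z hz
    rw [Finset.mem_filter] at hz
    have hs : s ≤ n - k := by have := hz.2.1; omega
    exact del_ins hmn hs z
  · intro w hw
    rw [Finset.mem_filter] at hw
    have hs : s ≤ n - k := by have := hw.2.1; omega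
    have h1 := prodp_ins hmn hs (del s k w (n - k)) pf
    rw [ins_del hmn hs w hw.2.2.1] at h1
    exact h1

lemma sum_Dword (pf : Fin 3 → ℝ) {k n : ℕ} (hk : k ≤ n) :
    ∑ w : Fin n → Fin 3, (if k ≤ Dword w then prodp pf w else 0)
      = (pf 1) ^ k * (pf 0 + pf 1 + pf 2) ^ (n - k) := by
  classical
  have step1 : ∀ w : Fin n → Fin 3, (if k ≤ Dword w then prodp pf w else 0)
      = ∑ s ∈ Finset.range (n - k + 1), (if goodSplit k w s then prodp pf w else 0) := by
    intro w
    by_cases hD : k ≤ Dword w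
    · obtain ⟨s₀, hgs⟩ := exists_goodSplit hk hD
      rw [if_pos hD]
      rw [Finset.sum_eq_single_of_mem s₀ (by rw [Finset.mem_range]; have := hgs.1; omega)]
      · rw [if_pos hgs]
      · intro s hs hne
        rw [if_neg]
        intro hgs'
        exact hne (goodSplit_unique hgs' hgs)
    · rw [if_neg hD]
      symm
      apply Finset.sum_eq_zero
      intro s hs
      rw [if_neg]
      intro hgs
      exact hD (le_Dword_of_goodSplit hgs)
  rw [Finset.sum_congr rfl (fun w _ => step1 w), Finset.sum_comm]
  have step2 : ∀ s ∈ Finset.range (n - k + 1),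
      ∑ w : Fin n → Fin 3, (if goodSplit k w s then prodp pf w else 0)
        = (pf 1) ^ k * ∑ z : Fin (n - k) → Fin 3,
            (if goodSplit 0 z s then prodp pf z else 0) := by
    intro s hs
    rw [Finset.mem_range] at hs
    exact sum_goodSplit pf (by omega)
  rw [Finset.sum_congr rfl step2, ← Finset.mul_sum, Finset.sum_comm]
  congr 1
  have step3 : ∀ z : Fin (n - k) → Fin 3,
      ∑ s ∈ Finset.range (n - k + 1), (if goodSplit 0 z s then prodp pf z else 0)
        = prodp pf z := by
    intro z
    obtain ⟨s₀, hs₀m, hgs⟩ := goodSplit0_exists z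
    rw [Finset.sum_eq_single_of_mem s₀ (by rw [Finset.mem_range]; omega)]
    · rw [if_pos hgs]
    · intro s hs hne
      rw [if_neg]
      intro hgs'
      exact hne (goodSplit_unique hgs' hgs)
  rw [Finset.sum_congr rfl (fun z _ => step3 z)]
  exact sum_prodp pf (n - k)

/-- classification of a value relative to level `i` -/
def cl (i : ℕ) (v : ℕ) : Fin 3 := if v < i then 0 else if v = i then 1 else 2

lemma cl_eq_zero_iff {i v : ℕ} : cl i v = 0 ↔ v < i := by
  unfold cl
  split_ifs with h1 h2 <;> simp_all <;> omega

lemma cl_eq_one_iff {i v : ℕ} : cl i v = 1 ↔ v = i := by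
  unfold cl
  split_ifs with h1 h2 <;> simp_all <;> omega

lemma cl_eq_two_iff {i v : ℕ} : cl i v = 2 ↔ i < v := by
  unfold cl
  split_ifs with h1 h2 <;> simp_all <;> omega

lemma sum_ind_lt (t : ℕ) (ht : t ≤ n) :
    ∑ j' : Fin n, (if (j' : ℕ) < t then (1:ℕ) else 0) = t := by
  rw [Fin.sum_univ_eq_sum_range (fun x => if x < t then (1:ℕ) else 0) n]
  rw [← Finset.sum_subset (Finset.range_subset_range.mpr ht)]
  · rw [Finset.sum_congr rfl (fun x hx => if_pos (Finset.mem_range.mp hx))]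
    simp
  · intro x _ hx
    rw [Finset.mem_range] at hx
    rw [if_neg (by omega)]

lemma invGamma_balance {G : Fin n → ℕ} {i : ℕ} {j : Fin n} (hGj : G j = i) :
    invGamma G j + Lct (fun j' => cl i (G j')) (j : ℕ)
      = Hct (fun j' => cl i (G j')) ((j : ℕ) + 1) + (j : ℕ) := by
  classical
  have key : ∀ j' : Fin n,
      (if G j < G j' ∨ (G j' = G j ∧ j' < j) then (1:ℕ) else 0)
        + (if (j' : ℕ) < (j : ℕ) ∧ cl i (G j') = 0 then (1:ℕ) else 0)
      = (if (j : ℕ) + 1 ≤ (j' : ℕ) ∧ cl i (G j') = 2 then (1:ℕ) else 0)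
        + (if (j' : ℕ) < (j : ℕ) then (1:ℕ) else 0) := by
    intro j'
    have hc1 : (G j < G j' ∨ (G j' = G j ∧ j' < j))
        ↔ (i < G j' ∨ (G j' = i ∧ (j' : ℕ) < (j : ℕ))) := by
      rw [hGj, Fin.lt_def]
    have hc2 : ((j' : ℕ) < (j : ℕ) ∧ cl i (G j') = 0)
        ↔ ((j' : ℕ) < (j : ℕ) ∧ G j' < i) := by
      rw [cl_eq_zero_iff]
    have hc3 : ((j : ℕ) + 1 ≤ (j' : ℕ) ∧ cl i (G j') = 2)
        ↔ ((j : ℕ) + 1 ≤ (j' : ℕ) ∧ i < G j') := by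
      rw [cl_eq_two_iff]
    rw [if_congr hc1 rfl rfl, if_congr hc2 rfl rfl, if_congr hc3 rfl rfl]
    by_cases hjj : j' = j
    · subst hjj
      rw [hGj]
      split_ifs <;> omega
    · have hne : (j' : ℕ) ≠ (j : ℕ) := fun h => hjj (Fin.ext h)
      split_ifs <;> omega
  calc invGamma G j + Lct (fun j' => cl i (G j')) (j : ℕ)
      = ∑ j' : Fin n, ((if G j < G j' ∨ (G j' = G j ∧ j' < j) then (1:ℕ) else 0)
          + (if (j' : ℕ) < (j : ℕ) ∧ cl i (G j') = 0 then (1:ℕ) else 0)) := by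
        rw [invGamma, Lct, Finset.card_filter, Finset.card_filter,
          Finset.sum_add_distrib]
    _ = ∑ j' : Fin n, ((if (j : ℕ) + 1 ≤ (j' : ℕ) ∧ cl i (G j') = 2 then (1:ℕ) else 0)
          + (if (j' : ℕ) < (j : ℕ) then (1:ℕ) else 0)) :=
        Finset.sum_congr rfl (fun j' _ => key j')
    _ = Hct (fun j' => cl i (G j')) ((j : ℕ) + 1) + (j : ℕ) := by
        rw [Finset.sum_add_distrib, Hct, Finset.card_filter,
          sum_ind_lt (j : ℕ) (by omega)]

lemma Dcount_eq_Dword (G : Fin n → ℕ) (i : ℕ) :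
    Dcount G i = Dword (fun j => cl i (G j)) := by
  classical
  unfold Dcount Dword Fx
  congr 1
  apply Finset.filter_congr
  intro j _
  constructor
  · rintro ⟨hGj, hinv⟩
    have hb := invGamma_balance (G := G) hGj
    exact ⟨cl_eq_one_iff.mpr hGj, by omega⟩
  · rintro ⟨hw, hbal⟩
    have hGj : G j = i := cl_eq_one_iff.mp hw
    have hb := invGamma_balance (G := G) hGj
    exact ⟨hGj, by omega⟩

lemma Dword_le (w : Fin n → Fin 3) : Dword w ≤ n := by
  calc Dword w ≤ Finset.univ.card := Finset.card_le_card (Finset.filter_subset _ _)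
    _ = n := Finset.card_fin n
end MajComb

open MajComb in
/-- For i.i.d. geometric `G₁, …, Gₙ` with parameter `1-q` and `D_i` the number of
fixed points of `Γₙ(G)` in `𝒢ᵢ`, we have `P(D_i ≥ k) = (qⁱ(1-q))^k` for `0 ≤ k ≤ n`
and `P(D_i ≥ k) = 0` for `k > n`; i.e. `D_i ∼ min(Geom(1 - qⁱ(1-q)), n)`. -/
theorem fixed_points_level_geometric {Ω : Type*} [MeasurableSpace Ω] (μ : Measure Ω)
    [IsProbabilityMeasure μ] (q : ℝ) (hq0 : 0 < q) (hq1 : q < 1)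
    (n : ℕ) (i : ℕ) (G : Fin n → Ω → ℕ) (hmeas : ∀ j, Measurable (G j))
    (hindep : iIndepFun G μ)
    (hgeom : ∀ j, ∀ m : ℕ, (μ {ω | G j ω = m}).toReal = q ^ m * (1 - q)) :
    (∀ k : ℕ, k ≤ n →
        (μ {ω | k ≤ Dcount (fun j => G j ω) i}).toReal = (q ^ i * (1 - q)) ^ k) ∧
      (∀ k : ℕ, n < k → (μ {ω | k ≤ Dcount (fun j => G j ω) i}).toReal = 0) := by
  classical
  -- the three classification events
  set A : Fin n → Fin 3 → Set Ω := fun j v => (G j) ⁻¹' {x | cl i x = v} with hA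
  have hAmeas : ∀ j v, MeasurableSet (A j v) := fun j v => (hmeas j) trivial
  -- weights
  set α : ℝ := ∑ m ∈ Finset.range i, q ^ m * (1 - q) with hα
  set β : ℝ := q ^ i * (1 - q) with hβ
  set pvec : Fin 3 → ℝ := ![α, β, 1 - α - β] with hpvec
  -- single-coordinate probabilities
  have hfac : ∀ j v, (μ (A j v)).toReal = pvec v := by
    intro j v
    have h1 : (μ (A j 1)).toReal = β := by
      have : A j 1 = {ω | G j ω = i} := by
        ext ω
        simp [hA, cl_eq_one_iff]
      rw [this, hβ]
      exact hgeom j i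
    have h0 : (μ (A j 0)).toReal = α := by
      have hU : A j 0 = ⋃ m ∈ Finset.range i, {ω | G j ω = m} := by
        ext ω
        simp [hA, cl_eq_zero_iff]
      have hdisj : Set.PairwiseDisjoint (↑(Finset.range i)) (fun m => {ω | G j ω = m}) := by
        intro a _ b _ hab
        apply Set.disjoint_left.mpr
        intro ω h1 h2
        simp only [Set.mem_setOf_eq] at h1 h2
        exact hab (h1 ▸ h2 ▸ rfl)
      have hm : ∀ m : ℕ, MeasurableSet {ω | G j ω = m} := fun m => by
        exact (hmeas j) (show MeasurableSet {x | x = m} from trivial)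
      rw [hU, measure_biUnion_finset hdisj (fun m _ => hm m), hα,
        ENNReal.toReal_sum (fun m _ => measure_ne_top μ _)]
      exact Finset.sum_congr rfl (fun m _ => hgeom j m)
    have hpart : (μ (A j 0)).toReal + (μ (A j 1)).toReal + (μ (A j 2)).toReal = 1 := by
      have hU : (⋃ v : Fin 3, A j v) = Set.univ := by
        ext ω
        simp only [Set.mem_iUnion, Set.mem_univ, iff_true]
        exact ⟨cl i (G j ω), rfl⟩
      have hdisj : Pairwise (Function.onFun Disjoint (fun v => A j v)) := by
        intro a b hab
        apply Set.disjoint_left.mpr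
        intro ω h1 h2
        simp only [hA, Set.mem_preimage, Set.mem_setOf_eq] at h1 h2
        exact hab (h1 ▸ h2 ▸ rfl)
      have := measure_iUnion (μ := μ) hdisj (fun v => hAmeas j v)
      rw [hU, measure_univ, tsum_fintype, Fin.sum_univ_three] at this
      have e0 := measure_ne_top μ (A j 0)
      have e1 := measure_ne_top μ (A j 1)
      have e2 := measure_ne_top μ (A j 2)
      have := congrArg ENNReal.toReal this.symm
      rw [ENNReal.toReal_add (by finiteness) e2, ENNReal.toReal_add e0 e1] at this
      simpa using this
    rcases fin3_cases v with rfl | rfl | rfl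
    · rw [h0]; simp [hpvec]
    · rw [h1]; simp [hpvec]
    · have : (μ (A j 2)).toReal = 1 - α - β := by rw [← h0, ← h1] at *; linarith
      rw [this]; simp [hpvec]
  -- cylinder events
  have hcyl : ∀ w : Fin n → Fin 3,
      μ (⋂ j, A j (w j)) = ∏ j, μ (A j (w j)) := by
    intro w
    apply hindep.meas_iInter
    intro j
    exact ⟨{x | cl i x = w j}, trivial, rfl⟩
  -- event decomposition
  have hdecomp : ∀ k : ℕ,
      {ω | k ≤ Dcount (fun j => G j ω) i}
        = ⋃ w ∈ Finset.univ.filter (fun w : Fin n → Fin 3 => k ≤ Dword w),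
            ⋂ j, A j (w j) := by
    intro k
    ext ω
    simp only [Set.mem_setOf_eq, Set.mem_iUnion, Finset.mem_filter, Finset.mem_univ,
      true_and, Set.mem_iInter, hA, Set.mem_preimage]
    rw [Dcount_eq_Dword (fun j => G j ω) i]
    constructor
    · intro hk
      exact ⟨fun j => cl i (G j ω), ⟨hk, fun j => rfl⟩⟩
    · rintro ⟨w, hk, hw⟩
      have : (fun j => cl i (G j ω)) = w := funext (fun j => hw j)
      rw [this]
      exact hk
  have hmeasure : ∀ k : ℕ, (μ {ω | k ≤ Dcount (fun j => G j ω) i}).toReal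
      = ∑ w ∈ Finset.univ.filter (fun w : Fin n → Fin 3 => k ≤ Dword w), prodp pvec w := by
    intro k
    rw [hdecomp k]
    have hdisj : Set.PairwiseDisjoint
        (↑(Finset.univ.filter (fun w : Fin n → Fin 3 => k ≤ Dword w)))
        (fun w : Fin n → Fin 3 => ⋂ j, A j (w j)) := by
      intro a _ b _ hab
      obtain ⟨j, hj⟩ : ∃ j, a j ≠ b j := by
        by_contra hc
        push_neg at hc
        exact hab (funext hc)
      apply Set.disjoint_left.mpr
      intro ω h1 h2
      rw [Set.mem_iInter] at h1 h2
      have e1 := h1 j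
      have e2 := h2 j
      simp only [hA, Set.mem_preimage, Set.mem_setOf_eq] at e1 e2
      exact hj (e1 ▸ e2 ▸ rfl)
    rw [measure_biUnion_finset hdisj
      (fun w _ => MeasurableSet.iInter (fun j => hAmeas j (w j))),
      ENNReal.toReal_sum (fun w _ => measure_ne_top μ _)]
    apply Finset.sum_congr rfl
    intro w _
    rw [hcyl w, ENNReal.toReal_prod, prodp]
    exact Finset.prod_congr rfl (fun j _ => hfac j (w j))
  constructor
  · intro k hk
    rw [hmeasure k, Finset.sum_filter, sum_Dword pvec hk]
    have hsum : pvec 0 + pvec 1 + pvec 2 = 1 := by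
      show α + β + (1 - α - β) = 1
      ring
    rw [hsum, one_pow, mul_one]
    show β ^ k = (q ^ i * (1 - q)) ^ k
    rw [hβ]
  · intro k hk
    have : {ω | k ≤ Dcount (fun j => G j ω) i} = ∅ := by
      ext ω
      simp only [Set.mem_setOf_eq, Set.mem_empty_iff_false, iff_false, not_le]
      calc Dcount (fun j => G j ω) i
          = Dword (fun j => cl i (G j ω)) := Dcount_eq_Dword _ i
        _ ≤ n := Dword_le _
        _ < k := hk
    rw [this]
    simp
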